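/- Let m ≡ 11 (mod 12) with m ≥ 11, n = 2^m - 1, and v = 2^((m+1)/2) - 1. Then gcd(v, n) = 1, and for every integer a with 1 ≤ a ≤ 2^((m-1)/2) + 2, the binary digit sum of (a·v mod n) is congruent to 0, 1, or 2 modulo 6. -/

import Mathlib

lemma S_def (b : ℕ) : (Nat.digits 2 b).sum = b % 2 + (Nat.digits 2 (b / 2)).sum := by
  rcases Nat.eq_zero_or_pos b with h | h
  · simp [h]
  · rw [Nat.digits_def' (by norm_num) h]; simp

lemma S_split : ∀ k b c : ℕ, b < 2 ^ k →
    (Nat.digits 2 (b + 2 ^ k * c)).sum = (Nat.digits 2 b).sum + (Nat.digits 2 c).sum := by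
  intro k
  induction k with
  | zero => intro b c hb; interval_cases b; simp
  | succ k ih =>
    intro b c hb
    rw [S_def (b + 2 ^ (k + 1) * c), S_def b]
    have h1 : (b + 2 ^ (k + 1) * c) % 2 = b % 2 := by
      have : 2 ^ (k+1) * c = 2 * (2 ^ k * c) := by ring
      omega
    have h2 : (b + 2 ^ (k + 1) * c) / 2 = b / 2 + 2 ^ k * c := by
      have : 2 ^ (k+1) * c = 2 * (2 ^ k * c) := by ring
      omega
    rw [h1, h2, ih (b/2) c (by omega)]
    ring

lemma S_compl : ∀ k b : ℕ, b < 2 ^ k →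
    (Nat.digits 2 b).sum + (Nat.digits 2 (2 ^ k - 1 - b)).sum = k := by
  intro k
  induction k with
  | zero => intro b hb; interval_cases b; simp
  | succ k ih =>
    intro b hb
    rw [S_def b, S_def (2 ^ (k+1) - 1 - b)]
    have hp : 2 ^ (k+1) = 2 * 2 ^ k := by ring
    have h1 : b % 2 + (2 ^ (k+1) - 1 - b) % 2 = 1 := by omega
    have h2 : (2 ^ (k+1) - 1 - b) / 2 = 2 ^ k - 1 - b / 2 := by omega
    rw [h2]
    have := ih (b / 2) (by omega)
    omega

lemma S_ones (k : ℕ) : (Nat.digits 2 (2 ^ k - 1)).sum = k := by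
  have := S_compl k 0 (by positivity)
  simpa using this

theorem m11mod12_defSet (m : ℕ) (hm : 11 ≤ m) (h : m % 12 = 11) :
    Nat.gcd (2 ^ ((m + 1) / 2) - 1) (2 ^ m - 1) = 1 ∧
    ∀ a : ℕ, 1 ≤ a → a ≤ 2 ^ ((m - 1) / 2) + 2 →
      (Nat.digits 2 (a * (2 ^ ((m + 1) / 2) - 1) % (2 ^ m - 1))).sum % 6 = 0 ∨
      (Nat.digits 2 (a * (2 ^ ((m + 1) / 2) - 1) % (2 ^ m - 1))).sum % 6 = 1 ∨
      (Nat.digits 2 (a * (2 ^ ((m + 1) / 2) - 1) % (2 ^ m - 1))).sum % 6 = 2 := by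
  set k := (m + 1) / 2 with hk
  have hm2 : m = 2 * k - 1 := by omega
  have hk6 : k % 6 = 0 := by omega
  have hk11 : 6 ≤ k := by omega
  have hm12 : (m - 1) / 2 = k - 1 := by omega
  rw [hm12]
  set P := 2 ^ (k - 1) with hP
  have hkP : 2 ^ k = 2 * P := by
    conv_lhs => rw [show k = (k - 1) + 1 from by omega]
    rw [pow_succ, hP]; ring
  have hmP : 2 ^ m = 2 * (P * P) := by
    have e : m = (k - 1) + k := by omega
    rw [e, pow_add, hkP, hP]; ring
  have hP32 : 32 ≤ P := by
    calc (32 : ℕ) = 2 ^ 5 := by norm_num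
    _ ≤ 2 ^ (k - 1) := Nat.pow_le_pow_right (by norm_num) (by omega)
  have hPle : P ≤ P * P := Nat.le_mul_of_pos_right P (by omega)
  have h32P : 32 * P ≤ P * P := Nat.mul_le_mul_right P hP32
  rw [hkP]
  constructor
  · -- gcd part
    have key : 2 ^ m - 1 = P - 1 + (2 * P - 1) * P := by
      rw [hmP]
      zify [show 1 ≤ 2 * (P * P) by omega, show 1 ≤ P by omega,
        show 1 ≤ 2 * P by omega]
      ring
    rw [key, Nat.gcd_add_mul_left_right (2 * P - 1) (P - 1) P]
    have key2 : 2 * P - 1 = 1 + (P - 1) * 2 := by omega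
    rw [Nat.gcd_comm, key2, Nat.gcd_add_mul_left_right (P - 1) 1 2]
    exact Nat.gcd_one_right _
  · intro a ha1 ha2
    have hcases : a ≤ P ∨ a = P + 1 ∨ a = P + 2 := by omega
    rcases hcases with hc | hc | hc
    · -- a ≤ P : value is a*(2P-1) itself, digit sum k
      have hval : a * (2 * P - 1) = (2 * P - a) + 2 ^ k * (a - 1) := by
        rw [hkP]
        zify [show 1 ≤ a from ha1, show a ≤ 2 * P by omega,
          show 1 ≤ 2 * P by omega]
        ring
      have hPm : P * (2 * P - 1) = 2 * (P * P) - P := by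
        zify [show 1 ≤ 2 * P by omega, show P ≤ 2 * (P * P) by omega]
        ring
      have hlt : a * (2 * P - 1) < 2 ^ m - 1 := by
        have h1 : a * (2 * P - 1) ≤ P * (2 * P - 1) :=
          Nat.mul_le_mul_right _ hc
        omega
      rw [Nat.mod_eq_of_lt hlt, hval,
        S_split k (2 * P - a) (a - 1) (by rw [hkP]; omega)]
      have hcompl := S_compl k (a - 1) (by rw [hkP]; omega)
      have he : 2 ^ k - 1 - (a - 1) = 2 * P - a := by rw [hkP]; omega
      rw [he] at hcompl
      left; omega
    · -- a = P + 1 : remainder is P, digit sum 1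
      have hval : a * (2 * P - 1) = (2 ^ m - 1) + P := by
        rw [hmP, hc]
        zify [show 1 ≤ 2 * (P * P) by omega, show 1 ≤ 2 * P by omega]
        ring
      rw [hval, Nat.add_mod_left,
        Nat.mod_eq_of_lt (show P < 2 ^ m - 1 by omega)]
      have hsplit := S_split (k - 1) 0 1 (by positivity)
      simp only [Nat.zero_add, Nat.mul_one] at hsplit
      rw [← hP] at hsplit
      rw [hsplit]
      right; left
      rw [S_def 1]; norm_num
    · -- a = P + 2 : remainder is 3P - 1, digit sum k
      have hval : a * (2 * P - 1) = (2 ^ m - 1) + (3 * P - 1) := by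
        rw [hmP, hc]
        zify [show 1 ≤ 2 * (P * P) by omega, show 1 ≤ 2 * P by omega,
          show 1 ≤ 3 * P by omega]
        ring
      rw [hval, Nat.add_mod_left,
        Nat.mod_eq_of_lt (show 3 * P - 1 < 2 ^ m - 1 by omega)]
      have he : 3 * P - 1 = (P - 1) + 2 ^ k * 1 := by rw [hkP]; omega
      rw [he, S_split k (P - 1) 1 (by rw [hkP]; omega)]
      have h1 : (Nat.digits 2 (P - 1)).sum = k - 1 := S_ones (k - 1)
      left
      have h2 : (Nat.digits 2 1).sum = 1 := by rw [S_def 1]; norm_num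
      omega
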